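/- Let Γ ⊆ (−1,1) be a measurable set, let u, σ : ℝ → ℝ, and suppose that for every z ∈ Γ the function w ↦ log((√(1−z²)·√(1−w²) + 1 − z·w)/|z−w|)·u(w) is integrable over Γ. Define Z(z) = z + i·√(1−z²). Then for every z ∈ Γ the equation ∫_Γ log((√(1−z²)·√(1−w²) + 1 − z·w)/|z−w|)·u(w) dw + σ(z)·u(z) = √(1−z²) holds if and only if the equation ∫_Γ log( |Z(z) − conj(Z(w))| / |Z(z) − Z(w)| )·u(w) dw + σ(z)·u(z) = Im(Z(z)) holds. -/

import Mathlib

open MeasureTheory Complex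

/-- The inverse Joukovski map `z ↦ z + i√(1−z²)` onto the upper unit semicircle. -/
noncomputable def Zmap (z : ℝ) : ℂ := z + Complex.I * Real.sqrt (1 - z ^ 2)

lemma Zmap_im (z : ℝ) : (Zmap z).im = Real.sqrt (1 - z ^ 2) := by
  simp [Zmap]

lemma key (z w : ℝ) (hz : z ∈ Set.Ioo (-1:ℝ) 1) (hw : w ∈ Set.Ioo (-1:ℝ) 1) :
    ‖Zmap z - (starRingEnd ℂ) (Zmap w)‖ / ‖Zmap z - Zmap w‖
      = (Real.sqrt (1 - z ^ 2) * Real.sqrt (1 - w ^ 2) + 1 - z * w) / |z - w| := by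
  set a := Real.sqrt (1 - z ^ 2) with ha_def
  set b := Real.sqrt (1 - w ^ 2) with hb_def
  have hz2 : (0:ℝ) < 1 - z ^ 2 := by nlinarith [hz.1, hz.2]
  have hw2 : (0:ℝ) < 1 - w ^ 2 := by nlinarith [hw.1, hw.2]
  have ha2 : a ^ 2 = 1 - z ^ 2 := Real.sq_sqrt hz2.le
  have hb2 : b ^ 2 = 1 - w ^ 2 := Real.sq_sqrt hw2.le
  have hapos : 0 < a := Real.sqrt_pos.mpr hz2
  have hbpos : 0 < b := Real.sqrt_pos.mpr hw2
  have h1 : ‖Zmap z - (starRingEnd ℂ) (Zmap w)‖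
      = Real.sqrt ((z - w) ^ 2 + (a + b) ^ 2) := by
    rw [Complex.norm_def, Complex.normSq_apply]
    congr 1
    simp [Zmap, ← ha_def, ← hb_def]
    ring
  have h2 : ‖Zmap z - Zmap w‖
      = Real.sqrt ((z - w) ^ 2 + (a - b) ^ 2) := by
    rw [Complex.norm_def, Complex.normSq_apply]
    congr 1
    simp [Zmap, ← ha_def, ← hb_def]
    ring
  rw [h1, h2]
  by_cases hzw : z = w
  · subst hzw
    have hab : a = b := by rw [ha_def, hb_def]
    simp [hab]
  · have hne : (z - w) ^ 2 > 0 := by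
      have : z - w ≠ 0 := sub_ne_zero.mpr hzw
      positivity
    have hprod : (a * b + 1 - z * w) * (1 - z * w - a * b) = (z - w) ^ 2 := by
      nlinarith [ha2, hb2]
    have hn : 0 < a * b + 1 - z * w := by nlinarith
    have hd : 0 < 1 - z * w - a * b := by nlinarith
    have hnum : (z - w) ^ 2 + (a + b) ^ 2 = 2 * (a * b + 1 - z * w) := by nlinarith
    have hden : (z - w) ^ 2 + (a - b) ^ 2 = 2 * (1 - z * w - a * b) := by nlinarith
    have habs : |z - w| = Real.sqrt ((a * b + 1 - z * w) * (1 - z * w - a * b)) := by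
      rw [hprod, Real.sqrt_sq_eq_abs]
    rw [hnum, hden, habs]
    rw [← Real.sqrt_div (by positivity)]
    conv_rhs => rw [← Real.sqrt_sq hn.le]
    rw [← Real.sqrt_div (by positivity)]
    congr 1
    field_simp
    exact Real.sqrt_sq hn.le

/-- The first NDR for the defocusing NLS soliton gas supported on `Γ ⊆ (−1,1)` holds
at `z ∈ Γ` if and only if the pulled-back first NDR for the circular focusing NLS
soliton gas holds at `z`. -/
theorem defNLS_NDR_iff_circular_NDR (Γ : Set ℝ) (hΓmeas : MeasurableSet Γ)
    (hΓ : Γ ⊆ Set.Ioo (-1 : ℝ) 1) (u σ : ℝ → ℝ)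
    (hint : ∀ z ∈ Γ, IntegrableOn (fun w =>
      Real.log ((Real.sqrt (1 - z ^ 2) * Real.sqrt (1 - w ^ 2) + 1 - z * w) / |z - w|)
        * u w) Γ) :
    ∀ z ∈ Γ,
      ((∫ w in Γ,
          Real.log ((Real.sqrt (1 - z ^ 2) * Real.sqrt (1 - w ^ 2) + 1 - z * w) / |z - w|)
            * u w) + σ z * u z = Real.sqrt (1 - z ^ 2)
        ↔
       (∫ w in Γ,
          Real.log (‖Zmap z - (starRingEnd ℂ) (Zmap w)‖
            / ‖Zmap z - Zmap w‖) * u w) + σ z * u z = (Zmap z).im) := by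
  intro z hz
  have hzI := hΓ hz
  have heq : ∀ w ∈ Γ,
      Real.log (‖Zmap z - (starRingEnd ℂ) (Zmap w)‖
        / ‖Zmap z - Zmap w‖) * u w
      = Real.log ((Real.sqrt (1 - z ^ 2) * Real.sqrt (1 - w ^ 2) + 1 - z * w) / |z - w|)
        * u w := by
    intro w hw
    rw [key z w hzI (hΓ hw)]
  rw [setIntegral_congr_fun hΓmeas heq, Zmap_im]
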